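/- Let F be a field of characteristic 0 and let f ∈ F[w]. Let λ ∈ F, define φ(w) := f(w) − w·∂̂_w f(λ), and let p(x,y) = (f(x) − f(y))/(x − y). Let d denote the local degree of p at (λ,λ) and let m denote the multiplicity of λ as a root of ∂̂_w φ(w). Then d = m. -/

import Mathlib

open MvPolynomial Polynomial

section Aux
variable {σ : Type*} {R : Type*} [CommRing R]

lemma pd_iter_zero (i : σ) (n : ℕ) :
    (fun r => pderiv i r)^[n] (0 : MvPolynomial σ R) = 0 := by
  induction n with
  | zero => rfl
  | succ n ih => rw [Function.iterate_succ_apply']; simp [ih]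

lemma pd_iter_add (i : σ) (n : ℕ) (a b : MvPolynomial σ R) :
    (fun r => pderiv i r)^[n] (a + b) =
      (fun r => pderiv i r)^[n] a + (fun r => pderiv i r)^[n] b := by
  induction n generalizing a b with
  | zero => rfl
  | succ n ih => rw [Function.iterate_succ_apply', Function.iterate_succ_apply',
      Function.iterate_succ_apply', ih]; simp

lemma pd_iter_C_mul (i : σ) (n : ℕ) (c : R) (q : MvPolynomial σ R) :
    (fun r => pderiv i r)^[n] (MvPolynomial.C c * q)
      = MvPolynomial.C c * (fun r => pderiv i r)^[n] q := by
  induction n generalizing q with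
  | zero => rfl
  | succ n ih => rw [Function.iterate_succ_apply', Function.iterate_succ_apply', ih]
                 simp [pderiv_mul]

lemma pd_iter_mul (i : σ) (u : MvPolynomial σ R) (c : R)
    (hu : pderiv i u = MvPolynomial.C c)
    (q : MvPolynomial σ R) (n : ℕ) :
    (fun r => pderiv i r)^[n+1] (u * q) =
      u * (fun r => pderiv i r)^[n+1] q +
        MvPolynomial.C ((n : R) + 1) * (MvPolynomial.C c * (fun r => pderiv i r)^[n] q) := by
  induction n generalizing q with
  | zero => simp [pderiv_mul, hu]; ring
  | succ n ih =>
      rw [show n + 1 + 1 = (n + 1) + 1 from rfl, Function.iterate_succ_apply,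
        pderiv_mul, hu, pd_iter_add, pd_iter_C_mul, ih,
        show (fun r => pderiv i r)^[n] ((pderiv i) q)
            = (fun r => pderiv i r)^[n+1] q from (Function.iterate_succ_apply _ n q).symm,
        show (fun r => pderiv i r)^[n+1] ((pderiv i) q)
            = (fun r => pderiv i r)^[n+2] q from (Function.iterate_succ_apply _ (n+1) q).symm]
      push_cast
      simp only [map_add, map_one]
      ring

lemma pd_iter_aeval_self (i : σ) (f : Polynomial R) (n : ℕ) :
    (fun r => pderiv i r)^[n] (Polynomial.aeval (X i : MvPolynomial σ R) f) =
      Polynomial.aeval (X i : MvPolynomial σ R) (Polynomial.derivative^[n] f) := by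
  induction n generalizing f with
  | zero => rfl
  | succ n ih =>
      rw [Function.iterate_succ_apply, Function.iterate_succ_apply]
      rw [show (pderiv i) (Polynomial.aeval (X i : MvPolynomial σ R) f)
          = Polynomial.aeval (X i : MvPolynomial σ R) (derivative f) from by
            rw [Derivation.comp_aeval_eq, pderiv_X_self, smul_eq_mul, mul_one], ih]

lemma pd_aeval_ne [DecidableEq σ] {i j : σ} (h : j ≠ i) (f : Polynomial R) :
    pderiv i (Polynomial.aeval (X j : MvPolynomial σ R) f) = 0 := by
  rw [Derivation.comp_aeval_eq, pderiv_X_of_ne h, smul_zero]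


lemma pd_iter_sub (i : σ) (n : ℕ) (a b : MvPolynomial σ R) :
    (fun r => pderiv i r)^[n] (a - b) =
      (fun r => pderiv i r)^[n] a - (fun r => pderiv i r)^[n] b := by
  induction n generalizing a b with
  | zero => rfl
  | succ n ih => rw [Function.iterate_succ_apply', Function.iterate_succ_apply',
      Function.iterate_succ_apply', ih]; simp

end Aux

section Key
variable {F : Type*} [Field F] [CharZero F]

lemma eval_aeval_X (x : Fin 2 → F) (j : Fin 2) (g : Polynomial F) :
    MvPolynomial.eval x (Polynomial.aeval (X j : MvPolynomial (Fin 2) F) g)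
      = g.eval (x j) := by
  rw [show MvPolynomial.eval x (Polynomial.aeval (X j : MvPolynomial (Fin 2) F) g)
      = (MvPolynomial.aeval x : MvPolynomial (Fin 2) F →ₐ[F] F)
          (Polynomial.aeval (X j : MvPolynomial (Fin 2) F) g) from by
        rw [← MvPolynomial.coe_aeval_eq_eval]; rfl]
  rw [← Polynomial.aeval_algHom_apply]
  simp only [MvPolynomial.aeval_X, Polynomial.aeval_def, Algebra.algebraMap_self]
  rfl

lemma keyI (f : Polynomial F) (lam : F) (p : MvPolynomial (Fin 2) F)
    (hp : (X 0 - X 1) * p =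
        Polynomial.aeval (X 0 : MvPolynomial (Fin 2) F) f -
        Polynomial.aeval (X 1 : MvPolynomial (Fin 2) F) f) (s : ℕ) :
    ((s : F) + 1) * MvPolynomial.eval (fun _ : Fin 2 => lam)
        ((fun r => pderiv (0 : Fin 2) r)^[s] p)
      = (Polynomial.derivative^[s+1] f).eval lam := by
  have hu : pderiv (0 : Fin 2) (X 0 - X 1) = MvPolynomial.C (1 : F) := by
    simp [pderiv_X_self, pderiv_X_of_ne (show (1 : Fin 2) ≠ 0 by decide)]
  have h := congrArg (fun q => MvPolynomial.eval (fun _ : Fin 2 => lam)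
      ((fun r => pderiv (0 : Fin 2) r)^[s+1] q)) hp
  rw [pd_iter_mul _ _ _ hu, pd_iter_sub, pd_iter_aeval_self,
    show (fun r => pderiv (0 : Fin 2) r)^[s+1]
        (Polynomial.aeval (X 1 : MvPolynomial (Fin 2) F) f)
      = (fun r => pderiv (0 : Fin 2) r)^[s]
        (pderiv (0 : Fin 2) (Polynomial.aeval (X 1 : MvPolynomial (Fin 2) F) f))
      from Function.iterate_succ_apply _ s _,
    pd_aeval_ne (show (1 : Fin 2) ≠ 0 by decide), pd_iter_zero] at h
  rw [map_add, map_mul, map_mul, map_sub, map_mul] at h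
  simp only [MvPolynomial.eval_X, MvPolynomial.eval_C, map_sub, map_zero] at h
  rw [eval_aeval_X] at h
  rw [sub_self, zero_mul, zero_add, one_mul, sub_zero] at h
  exact h

lemma keyII (f : Polynomial F) (lam : F) (p : MvPolynomial (Fin 2) F)
    (hp : (X 0 - X 1) * p =
        Polynomial.aeval (X 0 : MvPolynomial (Fin 2) F) f -
        Polynomial.aeval (X 1 : MvPolynomial (Fin 2) F) f) (i j : ℕ) :
    ((i : F) + 1) * MvPolynomial.eval (fun _ : Fin 2 => lam)
        ((fun r => pderiv (0 : Fin 2) r)^[i] ((fun r => pderiv (1 : Fin 2) r)^[j+1] p))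
      = ((j : F) + 1) * MvPolynomial.eval (fun _ : Fin 2 => lam)
        ((fun r => pderiv (0 : Fin 2) r)^[i+1] ((fun r => pderiv (1 : Fin 2) r)^[j] p)) := by
  have hu0 : pderiv (0 : Fin 2) (X 0 - X 1) = MvPolynomial.C (1 : F) := by
    simp [pderiv_X_self, pderiv_X_of_ne (show (1 : Fin 2) ≠ 0 by decide)]
  have hu1 : pderiv (1 : Fin 2) (X 0 - X 1 : MvPolynomial (Fin 2) F)
      = MvPolynomial.C (-1 : F) := by
    simp [pderiv_X_self, pderiv_X_of_ne (show (0 : Fin 2) ≠ 1 by decide)]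
  have h := congrArg (fun q => MvPolynomial.eval (fun _ : Fin 2 => lam)
      ((fun r => pderiv (0 : Fin 2) r)^[i+1]
        ((fun r => pderiv (1 : Fin 2) r)^[j+1] q))) hp
  rw [pd_iter_mul _ _ _ hu1, pd_iter_sub,
    show (fun r => pderiv (1 : Fin 2) r)^[j+1]
        (Polynomial.aeval (X 0 : MvPolynomial (Fin 2) F) f)
      = (fun r => pderiv (1 : Fin 2) r)^[j]
        (pderiv (1 : Fin 2) (Polynomial.aeval (X 0 : MvPolynomial (Fin 2) F) f))
      from Function.iterate_succ_apply _ j _,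
    pd_aeval_ne (show (0 : Fin 2) ≠ 1 by decide), pd_iter_zero,
    pd_iter_aeval_self, pd_iter_add, pd_iter_mul _ _ _ hu0, pd_iter_C_mul, pd_iter_C_mul,
    show (fun r => pderiv (0 : Fin 2) r)^[i+1]
        (0 - Polynomial.aeval (X 1 : MvPolynomial (Fin 2) F) ((Polynomial.derivative)^[j+1] f))
      = (fun r => pderiv (0 : Fin 2) r)^[i]
        (pderiv (0 : Fin 2)
          (0 - Polynomial.aeval (X 1 : MvPolynomial (Fin 2) F) ((Polynomial.derivative)^[j+1] f)))
      from Function.iterate_succ_apply _ i _] at h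
  rw [map_sub, map_zero, pd_aeval_ne (show (1 : Fin 2) ≠ 0 by decide),
    zero_sub, show (fun r => pderiv (0 : Fin 2) r)^[i] (-(0:MvPolynomial (Fin 2) F))
      = 0 from by rw [neg_zero, pd_iter_zero]] at h
  rw [map_add, map_add, map_mul, map_mul, map_mul, map_mul, map_mul, map_sub] at h
  simp only [MvPolynomial.eval_X, MvPolynomial.eval_C, map_zero] at h
  rw [sub_self, zero_mul, zero_add, one_mul] at h
  -- h : (i+1) * A i (j+1) + (j+1) * (-1 * A (i+1) j) = 0
  have := h
  linear_combination h

end Key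

theorem local_degree_eq_root_multiplicity
    {F : Type*} [Field F] [CharZero F]
    (f : Polynomial F) (lam : F)
    (phi : Polynomial F)
    (hphi : phi = f - Polynomial.X * Polynomial.C (f.derivative.eval lam))
    (p : MvPolynomial (Fin 2) F)
    (hp : (X 0 - X 1) * p =
        Polynomial.aeval (X 0 : MvPolynomial (Fin 2) F) f -
        Polynomial.aeval (X 1 : MvPolynomial (Fin 2) F) f)
    (hpc : p.totalDegree ≠ 0)
    (H : ℕ → ℕ → MvPolynomial (Fin 2) F → MvPolynomial (Fin 2) F)
    (hH : ∀ β γ q, H β γ q =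
        ((β.factorial * γ.factorial : F))⁻¹ •
          ((fun r => pderiv (0 : Fin 2) r)^[β] ((fun r => pderiv (1 : Fin 2) r)^[γ] q)))
    (d : ℕ) (hd1 : 1 ≤ d)
    (hlow : ∀ β γ : ℕ, 1 ≤ β + γ → β + γ < d →
        MvPolynomial.eval (fun _ : Fin 2 => lam) (H β γ p) = 0)
    (hnz : ∃ β γ : ℕ, β + γ = d ∧
        MvPolynomial.eval (fun _ : Fin 2 => lam) (H β γ p) ≠ 0) :
    d = (Polynomial.derivative phi).rootMultiplicity lam := by
  set x : Fin 2 → F := fun _ => lam with hx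
  set A : ℕ → ℕ → F := fun β γ => MvPolynomial.eval x
      ((fun r => pderiv (0 : Fin 2) r)^[β] ((fun r => pderiv (1 : Fin 2) r)^[γ] p)) with hA
  have hfac : ∀ β γ : ℕ, ((β.factorial * γ.factorial : F)) ≠ 0 := by
    intro β γ
    have h1 : ((β.factorial : F)) ≠ 0 := Nat.cast_ne_zero.mpr β.factorial_ne_zero
    have h2 : ((γ.factorial : F)) ≠ 0 := Nat.cast_ne_zero.mpr γ.factorial_ne_zero
    exact mul_ne_zero h1 h2
  have hHeval : ∀ β γ, MvPolynomial.eval x (H β γ p)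
      = ((β.factorial * γ.factorial : F))⁻¹ * A β γ := by
    intro β γ
    rw [hH, MvPolynomial.smul_eval, hA]
  have hAzero : ∀ β γ : ℕ, 1 ≤ β + γ → β + γ < d → A β γ = 0 := by
    intro β γ h1 h2
    have := hlow β γ h1 h2
    rw [hHeval] at this
    rcases mul_eq_zero.mp this with h | h
    · exact absurd h (inv_ne_zero (hfac β γ))
    · exact h
  have hAnz : ∃ β γ : ℕ, β + γ = d ∧ A β γ ≠ 0 := by
    obtain ⟨β, γ, h1, h2⟩ := hnz
    refine ⟨β, γ, h1, fun h => h2 ?_⟩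
    rw [hHeval, h, mul_zero]
  -- (a) low derivatives of f vanish
  have hfs : ∀ s : ℕ, 1 ≤ s → s < d → (Polynomial.derivative^[s+1] f).eval lam = 0 := by
    intro s h1 h2
    rw [← keyI f lam p hp s]
    have : A s 0 = 0 := hAzero s 0 (by omega) (by omega)
    have hA0 : MvPolynomial.eval x ((fun r => pderiv (0 : Fin 2) r)^[s] p) = A s 0 := rfl
    rw [hA0, this, mul_zero]
  -- (b) chain: move nonzero A to (d, 0)
  have hchain : ∀ γ β : ℕ, A β γ ≠ 0 → A (β + γ) 0 ≠ 0 := by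
    intro γ
    induction γ with
    | zero => intro β h; exact h
    | succ j ih =>
        intro β h
        have hk : ((β : F) + 1) * A β (j+1) = ((j : F) + 1) * A (β+1) j := by
          simpa only [hA, hx] using keyII f lam p hp β j
        have h2 : A (β+1) j ≠ 0 := by
          intro h0
          rw [h0, mul_zero] at hk
          exact (mul_ne_zero (Nat.cast_add_one_ne_zero β) h) hk
        have := ih (β+1) h2
        rwa [show β + 1 + j = β + (j + 1) by omega] at this
  have hAd0 : A d 0 ≠ 0 := by
    obtain ⟨β, γ, h1, h2⟩ := hAnz
    have := hchain γ β h2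
    rwa [h1] at this
  have hfd : (Polynomial.derivative^[d+1] f).eval lam ≠ 0 := by
    rw [← keyI f lam p hp d]
    exact mul_ne_zero (Nat.cast_add_one_ne_zero d) hAd0
  -- (c) root multiplicity of ψ = derivative phi
  set ψ := Polynomial.derivative phi with hψdef
  have hψ : ψ = Polynomial.derivative f - Polynomial.C (f.derivative.eval lam) := by
    rw [hψdef, hphi]
    simp [Polynomial.derivative_mul]
  have hit : ∀ m : ℕ, Polynomial.derivative^[m+1] ψ = Polynomial.derivative^[m+2] f := by
    intro m
    have h1 : Polynomial.derivative ψ = Polynomial.derivative^[2] f := by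
      rw [hψ]; simp [Function.iterate_succ_apply]
    rw [Function.iterate_succ_apply, h1,
      show (⇑Polynomial.derivative)^[m+2] f
        = (⇑Polynomial.derivative)^[m] ((⇑Polynomial.derivative)^[2] f) from by
          rw [← Function.iterate_add_apply]]
  have hψ0 : ψ.eval lam = 0 := by rw [hψ]; simp
  have hroots : ∀ m ≤ d - 1, (Polynomial.derivative^[m] ψ).IsRoot lam := by
    intro m hm
    match m with
    | 0 => exact hψ0
    | Nat.succ k =>
        rw [hit k]
        exact hfs (k+1) (by omega) (by omega)
  have hdnz : (Polynomial.derivative^[d] ψ).eval lam ≠ 0 := by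
    have : d = (d - 1) + 1 := by omega
    rw [this, hit (d-1), show d - 1 + 2 = d + 1 by omega]
    exact hfd
  have hψne : ψ ≠ 0 := by
    intro h
    rw [h] at hdnz
    simp at hdnz
  have hge : d - 1 < ψ.rootMultiplicity lam := by
    refine (lt_rootMultiplicity_iff_isRoot_iterate_derivative_of_mem_nonZeroDivisors
      hψne (mem_nonZeroDivisors_of_ne_zero
        (Nat.cast_ne_zero.mpr (d-1).factorial_ne_zero))).mpr hroots
  have hle : ψ.rootMultiplicity lam ≤ d := by
    by_contra hlt
    push_neg at hlt
    exact hdnz (isRoot_iterate_derivative_of_lt_rootMultiplicity hlt)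
  omega
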